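/- Let P be a compact convex subset of ℝ^d with nonempty interior satisfying P = −P, and let Λ be an additive subgroup of ℝ^d such that the translates P + t, for t ∈ Λ, have pairwise disjoint interiors and cover ℝ^d. If t₁, t₂ ∈ Λ are distinct and t₁ − t₂ ∈ 2Λ (i.e., t₁ and t₂ belong to the same parity class modulo 2Λ), then (P + t₁) ∩ (P + t₂) = ∅. -/

import Mathlib

open Pointwise

/-- The parity lemma: in a tiling of `ℝ^d` by `Λ`-translates of a centrally symmetric
compact convex body `P`, two distinct tiles whose centers agree modulo `2Λ` are disjoint. -/
theorem parity_lemma (d : ℕ) (P : Set (EuclideanSpace ℝ (Fin d)))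
    (hPcompact : IsCompact P) (hPconvex : Convex ℝ P)
    (hPint : (interior P).Nonempty) (hPsymm : P = -P)
    (Λ : AddSubgroup (EuclideanSpace ℝ (Fin d)))
    (hpack : ∀ s ∈ Λ, ∀ t ∈ Λ, s ≠ t →
      Disjoint (interior (s +ᵥ P)) (interior (t +ᵥ P)))
    (hcover : (⋃ t ∈ (Λ : Set (EuclideanSpace ℝ (Fin d))), t +ᵥ P) = Set.univ)
    (t₁ t₂ : EuclideanSpace ℝ (Fin d)) (h₁ : t₁ ∈ Λ) (h₂ : t₂ ∈ Λ) (hne : t₁ ≠ t₂)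
    (hpar : ∃ u ∈ Λ, t₁ - t₂ = 2 • u) :
    (t₁ +ᵥ P) ∩ (t₂ +ᵥ P) = ∅ := by
  by_contra hcon
  obtain ⟨x, hx₁, hx₂⟩ := Set.nonempty_iff_ne_empty.mpr hcon
  obtain ⟨u, huΛ, hu2⟩ := hpar
  have hu2' : t₁ - t₂ = u + u := by rw [hu2, two_smul]
  have hnegmem : ∀ z ∈ P, -z ∈ P := by
    intro z hz
    rw [hPsymm]
    exact Set.neg_mem_neg.mpr hz
  have ha : -t₁ + x ∈ P := by rwa [Set.mem_vadd_set_iff_neg_vadd_mem, vadd_eq_add] at hx₁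
  have hb : -t₂ + x ∈ P := by rwa [Set.mem_vadd_set_iff_neg_vadd_mem, vadd_eq_add] at hx₂
  -- u ∈ P
  have key : u = (1/2 : ℝ) • (-(-t₁ + x)) + (1/2 : ℝ) • (-t₂ + x) := by
    have h2 : (2 : ℝ) • u = (2 : ℝ) • ((1/2 : ℝ) • (-(-t₁ + x)) + (1/2 : ℝ) • (-t₂ + x)) := by
      rw [show (2 : ℝ) • u = u + u from two_smul ℝ u, ← hu2']
      module
    exact smul_right_injective _ (by norm_num : (2:ℝ) ≠ 0) h2
  have huP : u ∈ P := by
    rw [key]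
    exact hPconvex (hnegmem _ ha) hb (by norm_num) (by norm_num) (by norm_num)
  set m := t₂ + u with hm
  have hmΛ : m ∈ Λ := Λ.add_mem h₂ huΛ
  have hune : u ≠ 0 := by
    intro h
    apply hne
    have : t₁ - t₂ = 0 := by rw [hu2', h, add_zero]
    exact sub_eq_zero.mp this
  have hmne : m ≠ t₁ := by
    intro h
    apply hune
    have h4 : u + u = u := by
      have e : t₁ - t₂ = u := by rw [← h, hm]; abel
      rw [← hu2']
      exact e
    exact add_eq_right.mp h4
  -- 0 ∈ interior P
  have h0 : (0 : EuclideanSpace ℝ (Fin d)) ∈ interior P := by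
    obtain ⟨y, hy⟩ := hPint
    have hni : -interior P = interior (-P) := by
      rw [← Set.image_neg_eq_neg, ← Set.image_neg_eq_neg (s := P)]
      exact (Homeomorph.neg (EuclideanSpace ℝ (Fin d))).image_interior P
    have hy' : -y ∈ interior P := by
      have h5 : -y ∈ -interior P := Set.neg_mem_neg.mpr hy
      rwa [hni, ← hPsymm] at h5
    have := hPconvex.interior hy hy' (by norm_num : (0:ℝ) ≤ 1/2) (by norm_num : (0:ℝ) ≤ 1/2)
      (by norm_num)
    convert this using 1
    module
  -- m is interior to its own tile
  have hm_int : m ∈ interior (m +ᵥ P) := by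
    rw [interior_vadd]
    rw [Set.mem_vadd_set]
    exact ⟨0, h0, by simp⟩
  -- m lies in the tile of t₁
  have hm_t₁ : m ∈ t₁ +ᵥ P := by
    rw [Set.mem_vadd_set_iff_neg_vadd_mem, vadd_eq_add]
    have e : -t₁ + m = -(t₁ - t₂) + u := by rw [hm]; abel
    rw [e, hu2']
    have : -(u + u) + u = -u := by abel
    rw [this]
    exact hnegmem _ huP
  -- an interior point of t₁'s tile
  have hw : ∃ w, w ∈ interior (t₁ +ᵥ P) := by
    obtain ⟨y, hy⟩ := hPint
    refine ⟨t₁ + y, ?_⟩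
    rw [interior_vadd]
    exact ⟨y, hy, rfl⟩
  obtain ⟨w, hw⟩ := hw
  -- find a point in both interiors
  obtain ⟨ε, hε, hball⟩ := Metric.isOpen_iff.mp isOpen_interior m hm_int
  have hconv₁ : Convex ℝ (t₁ +ᵥ P) := hPconvex.vadd t₁
  set s : ℝ := min 1 (ε / (2 * (‖w - m‖ + 1))) with hs
  have hden : (0:ℝ) < 2 * (‖w - m‖ + 1) := by positivity
  have hspos : 0 < s := lt_min one_pos (by positivity)
  have hs1 : s ≤ 1 := min_le_left _ _
  have hz : m + s • (w - m) ∈ interior (t₁ +ᵥ P) := by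
    have hwm : m + (w - m) ∈ interior (t₁ +ᵥ P) := by
      have : m + (w - m) = w := by abel
      rw [this]; exact hw
    exact hconv₁.add_smul_mem_interior hm_t₁ hwm ⟨hspos, hs1⟩
  have hz' : m + s • (w - m) ∈ interior (m +ᵥ P) := by
    apply hball
    rw [Metric.mem_ball, dist_eq_norm]
    have : m + s • (w - m) - m = s • (w - m) := by abel
    rw [this, norm_smul, Real.norm_eq_abs, abs_of_pos hspos]
    have h1 : s ≤ ε / (2 * (‖w - m‖ + 1)) := min_le_right _ _
    have h2 : s * ‖w - m‖ ≤ ε / (2 * (‖w - m‖ + 1)) * ‖w - m‖ :=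
      mul_le_mul_of_nonneg_right h1 (norm_nonneg _)
    have h3 : ε / (2 * (‖w - m‖ + 1)) * ‖w - m‖ < ε := by
      rw [div_mul_eq_mul_div, div_lt_iff₀ hden]
      nlinarith [norm_nonneg (w - m)]
    linarith
  exact (hpack m hmΛ t₁ h₁ hmne).ne_of_mem hz' hz rfl
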